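/- Let (F_i)_{i∈ι} be a finite family of convex sets in ℝ^n, and let A and B be nonempty disjoint convex sets in ℝ^n such that for every subset S ⊆ ι with ⋂_{i∈S} F_i ≠ ∅, both (⋂_{i∈S} F_i) ∩ A ≠ ∅ and (⋂_{i∈S} F_i) ∩ B ≠ ∅. Then there exists an affine hyperplane h in ℝ^n (weakly separating A from B) such that, setting G_i = F_i ∩ h for each i, one has for every nonempty subset S ⊆ ι: ⋂_{i∈S} G_i ≠ ∅ if and only if ⋂_{i∈S} F_i ≠ ∅. In particular, the nerve of the family (G_i) of convex sets contained in the hyperplane h equals the nerve of (F_i). -/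

import Mathlib

open Set Pointwise

/-- Weak separation of a convex set from `0` in Euclidean space. -/
lemma exists_sep_zero (n : ℕ) (D : Set (EuclideanSpace ℝ (Fin n))) (hD : Convex ℝ D)
    (hne : D.Nonempty) (h0 : (0 : EuclideanSpace ℝ (Fin n)) ∉ D) :
    ∃ f : EuclideanSpace ℝ (Fin n) →L[ℝ] ℝ, f ≠ 0 ∧ ∀ x ∈ D, f x ≤ 0 := by
  by_cases hTop : affineSpan ℝ D = ⊤
  · -- full dimensional case
    have hclTop : affineSpan ℝ (closure D) = ⊤ :=
      top_le_iff.mp (hTop ▸ affineSpan_mono ℝ subset_closure)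
    have hint : (interior (closure D)).Nonempty :=
      (hD.closure.interior_nonempty_iff_affineSpan_eq_top).mpr hclTop
    have hintD : (interior D).Nonempty :=
      (hD.interior_nonempty_iff_affineSpan_eq_top).mpr hTop
    obtain ⟨y, hy⟩ := hint
    have h0i : (0 : EuclideanSpace ℝ (Fin n)) ∉ interior (closure D) := by
      intro h0i
      obtain ⟨y', hy'⟩ := hintD
      obtain ⟨ε, hε, hball⟩ := Metric.isOpen_iff.mp isOpen_interior 0 h0i
      set t : ℝ := ε / (2 * (‖y'‖ + 1)) with ht
      have hy'pos : (0:ℝ) < ‖y'‖ + 1 := by positivity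
      have htpos : 0 < t := by positivity
      have hz : (-t) • y' ∈ closure D := by
        apply interior_subset (hball _)
        simp only [Metric.mem_ball, dist_zero_right, norm_smul, norm_neg, Real.norm_eq_abs,
          abs_of_pos htpos]
        calc t * ‖y'‖ ≤ t * (‖y'‖ + 1) := by nlinarith [htpos]
          _ = ε / 2 := by rw [ht]; field_simp
          _ < ε := by linarith
      have hcombo := hD.combo_closure_interior_mem_interior hz hy'
        (a := 1/(1+t)) (b := t/(1+t)) (by positivity) (by positivity)
        (by field_simp)
      have : (1/(1+t)) • ((-t) • y') + (t/(1+t)) • y' = (0 : EuclideanSpace ℝ (Fin n)) := by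
        rw [smul_smul]
        rw [← add_smul]
        have : 1 / (1 + t) * (-t) + t / (1 + t) = 0 := by field_simp; ring
        rw [this, zero_smul]
      rw [this] at hcombo
      exact h0 (interior_subset hcombo)
    obtain ⟨f, hf⟩ := geometric_hahn_banach_open_point (hD.closure.interior) isOpen_interior h0i
    simp only [map_zero] at hf
    refine ⟨f, ?_, ?_⟩
    · intro hf0
      have := hf y hy
      rw [hf0] at this
      simp at this
    · intro x hx
      by_contra hfx
      push_neg at hfx
      have hfy : f y < 0 := hf y hy
      set t : ℝ := ((-f y)/(f x - f y) + 1) / 2 with ht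
      have hxy : 0 < f x - f y := by linarith
      have ht0 : (-f y)/(f x - f y) < 1 := by
        rw [div_lt_one hxy]; linarith
      have ht0' : 0 < (-f y)/(f x - f y) := div_pos (by linarith) hxy
      have htpos : 0 < t := by rw [ht]; linarith
      have htlt : t < 1 := by rw [ht]; linarith
      have hmem := (hD.closure).combo_interior_closure_mem_interior hy
        (subset_closure (subset_closure hx)) (a := 1 - t) (b := t) (by linarith) (by linarith) (by ring)
      have hval := hf _ hmem
      have : f ((1-t) • y + t • x) = (1-t) * f y + t * f x := by
        simp [map_add, map_smul, smul_eq_mul]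
      rw [this] at hval
      have hkey : t * (f x - f y) > - f y := by
        have : (-f y)/(f x - f y) < t := by rw [ht]; linarith
        calc -f y = ((-f y)/(f x - f y)) * (f x - f y) := by field_simp
          _ < t * (f x - f y) := by
            exact mul_lt_mul_of_pos_right this hxy
      nlinarith
  · -- degenerate case: span is proper, pick a normal vector
    have hSne : (affineSpan ℝ D : Set (EuclideanSpace ℝ (Fin n))).Nonempty :=
      hne.mono (subset_affineSpan ℝ D)
    have hdir : (affineSpan ℝ D).direction ≠ ⊤ := by
      intro h
      exact hTop ((AffineSubspace.direction_eq_top_iff_of_nonempty hSne).mp h)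
    have horth : ((affineSpan ℝ D).direction)ᗮ ≠ ⊥ := by
      intro h
      exact hdir (Submodule.orthogonal_eq_bot_iff.mp h)
    obtain ⟨v, hv, hvne⟩ := Submodule.exists_mem_ne_zero_of_ne_bot horth
    obtain ⟨d₀, hd₀⟩ := hne
    have hconst : ∀ x ∈ D, (innerSL ℝ v) x = (innerSL ℝ v) d₀ := by
      intro x hx
      have : x -ᵥ d₀ ∈ (affineSpan ℝ D).direction :=
        AffineSubspace.vsub_mem_direction (subset_affineSpan ℝ D hx) (subset_affineSpan ℝ D hd₀)
      have := hv _ this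
      simp only [vsub_eq_sub] at this
      have h2 : inner ℝ v (x - d₀) = (0:ℝ) := by
        rw [real_inner_comm]; exact this
      simp only [innerSL_apply_apply]
      rw [inner_sub_right] at h2
      linarith
    have hne0 : innerSL ℝ v ≠ 0 := by
      intro h
      apply hvne
      have : (innerSL ℝ v) v = 0 := by rw [h]; rfl
      simp only [innerSL_apply_apply] at this
      exact inner_self_eq_zero.mp this
    by_cases hc : (innerSL ℝ v) d₀ ≤ 0
    · exact ⟨innerSL ℝ v, hne0, fun x hx => (hconst x hx) ▸ hc⟩
    · refine ⟨-(innerSL ℝ v), ?_, fun x hx => ?_⟩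
      · simpa [neg_eq_zero] using hne0
      · push_neg at hc
        have := hconst x hx
        simp only [ContinuousLinearMap.neg_apply]
        rw [this]
        linarith

/-- Weak separation of two disjoint convex sets by an affine functional. -/
lemma exists_affine_sep (n : ℕ) (A B : Set (EuclideanSpace ℝ (Fin n)))
    (hA : Convex ℝ A) (hB : Convex ℝ B) (hAne : A.Nonempty) (hBne : B.Nonempty)
    (hAB : A ∩ B = ∅) :
    ∃ g : EuclideanSpace ℝ (Fin n) →ᵃ[ℝ] ℝ, g.linear ≠ 0 ∧
      (∀ x ∈ A, g x ≤ 0) ∧ (∀ x ∈ B, 0 ≤ g x) := by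
  have hDconv : Convex ℝ (A - B) := hA.sub hB
  have hDne : (A - B).Nonempty := hAne.sub hBne
  have h0 : (0 : EuclideanSpace ℝ (Fin n)) ∉ A - B := by
    rintro ⟨a, ha, b, hb, hab⟩
    have : a = b := by
      have := sub_eq_zero.mp hab
      exact this
    rw [this] at ha
    have : b ∈ A ∩ B := ⟨ha, hb⟩
    simp [hAB] at this
  obtain ⟨f, hfne, hfle⟩ := exists_sep_zero n (A - B) hDconv hDne h0
  obtain ⟨b₀, hb₀⟩ := hBne
  have hle : ∀ a ∈ A, ∀ b ∈ B, f a ≤ f b := by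
    intro a ha b hb
    have : f (a - b) ≤ 0 := hfle _ (Set.sub_mem_sub ha hb)
    rw [map_sub] at this
    linarith
  have hbdd : BddAbove (f '' A) := by
    refine ⟨f b₀, ?_⟩
    rintro y ⟨a, ha, rfl⟩
    exact hle a ha b₀ hb₀
  set s : ℝ := sSup (f '' A) with hs
  refine ⟨AffineMap.mk (fun x => f x - s) f.toLinearMap (by intro p v; simp; ring), ?_, ?_, ?_⟩
  · intro h
    apply hfne
    ext x
    have : f.toLinearMap x = 0 := by rw [show f.toLinearMap = 0 from h]; rfl
    simpa using this
  · intro a ha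
    simp only [AffineMap.coe_mk]
    have : f a ≤ s := le_csSup hbdd (Set.mem_image_of_mem f ha)
    linarith
  · intro b hb
    simp only [AffineMap.coe_mk]
    have : s ≤ f b := by
      apply csSup_le (hAne.image f)
      rintro y ⟨a, ha, rfl⟩
      exact hle a ha b hb
    linarith

/-- **Slicing by a separating hyperplane.** Let `(F i)` be a finite family of convex sets in
`ℝ^n`, and let `A`, `B` be nonempty disjoint convex sets such that every nonempty intersection
of a subfamily of the `F i` also meets both `A` and `B`. Then there is an affine hyperplane
`h = {x | f x = 0}` (given by an affine functional `f` with nonzero linear part, which is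
`≤ 0` on `A` and `≥ 0` on `B`) such that the sets `G i = F i ∩ h` have the same intersection
pattern, and hence the same nerve, as the `F i`. -/
theorem nerve_preserved_on_separating_hyperplane (n : ℕ) (ι : Type*) [Fintype ι]
    (F : ι → Set (EuclideanSpace ℝ (Fin n)))
    (hconv : ∀ i, Convex ℝ (F i))
    (A B : Set (EuclideanSpace ℝ (Fin n)))
    (hA : Convex ℝ A) (hB : Convex ℝ B)
    (hAne : A.Nonempty) (hBne : B.Nonempty)
    (hAB : A ∩ B = ∅)
    (hmeet : ∀ S : Finset ι, (⋂ i ∈ S, F i).Nonempty →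
      ((⋂ i ∈ S, F i) ∩ A).Nonempty ∧ ((⋂ i ∈ S, F i) ∩ B).Nonempty) :
    ∃ f : EuclideanSpace ℝ (Fin n) →ᵃ[ℝ] ℝ,
      f.linear ≠ 0 ∧
      (∀ x ∈ A, f x ≤ 0) ∧ (∀ x ∈ B, 0 ≤ f x) ∧
      (∀ S : Finset ι, S.Nonempty →
        ((⋂ i ∈ S, F i ∩ {x | f x = 0}).Nonempty ↔ (⋂ i ∈ S, F i).Nonempty)) := by
  obtain ⟨g, hgl, hgA, hgB⟩ := exists_affine_sep n A B hA hB hAne hBne hAB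
  refine ⟨g, hgl, hgA, hgB, ?_⟩
  intro S hS
  constructor
  · rintro ⟨x, hx⟩
    refine ⟨x, ?_⟩
    simp only [Set.mem_iInter] at hx ⊢
    intro i hi
    exact (hx i hi).1
  · intro hSne
    obtain ⟨⟨a, haC, haA⟩, ⟨b, hbC, hbB⟩⟩ := hmeet S hSne
    have hC : Convex ℝ (⋂ i ∈ S, F i) :=
      convex_iInter fun i => convex_iInter fun _ => hconv i
    have hga : g a ≤ 0 := hgA a haA
    have hgb : 0 ≤ g b := hgB b hbB
    have hcont : Continuous fun t : ℝ => g (AffineMap.lineMap a b t) :=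
      (g.comp (AffineMap.lineMap a b)).continuous_of_finiteDimensional
    have hivt := intermediate_value_Icc (zero_le_one (α := ℝ)) hcont.continuousOn
    simp only [AffineMap.lineMap_apply_zero, AffineMap.lineMap_apply_one] at hivt
    have h0mem : (0:ℝ) ∈ Set.Icc (g a) (g b) := ⟨hga, hgb⟩
    obtain ⟨t, htI, htval⟩ := hivt h0mem
    refine ⟨AffineMap.lineMap a b t, ?_⟩
    have hxC : AffineMap.lineMap a b t ∈ ⋂ i ∈ S, F i := by
      apply hC.segment_subset haC hbC
      rw [segment_eq_image_lineMap]
      exact Set.mem_image_of_mem _ htI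
    simp only [Set.mem_iInter] at hxC ⊢
    intro i hi
    exact ⟨hxC i hi, htval⟩
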